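/- At the optimal tuning parameter λ* = tr(H^{-1}(Cov(∇ℓ,∇ℓ^{f̄}) + Cov(∇ℓ^{f̄},∇ℓ))H^{-1}) / (2(1+r)·tr(H^{-1}Var(∇ℓ^{f̄})H^{-1})), the minimized asymptotic variance satisfies tr(Σ_{λ*}) ≤ tr(Σ_0) = tr(H^{-1}Var(∇ℓ)H^{-1}); that is, optimally tuned (C)PPI never has larger asymptotic variance than ERM. -/

import Mathlib

open MeasureTheory ProbabilityTheory Matrix

lemma l2_mul_integrable {Ω : Type*} [MeasurableSpace Ω] {μ : Measure Ω} {u v : Ω → ℝ}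
    (hu : MemLp u 2 μ) (hv : MemLp v 2 μ) : Integrable (fun ω => u ω * v ω) μ := by
  refine ((hu.integrable_sq.add hv.integrable_sq).const_mul (1/2 : ℝ)).mono'
    (hu.aestronglyMeasurable.mul hv.aestronglyMeasurable) ?_
  filter_upwards with ω
  rw [Real.norm_eq_abs, abs_mul]
  simp only [Pi.add_apply]
  nlinarith [sq_nonneg (|u ω| - |v ω|), sq_abs (u ω), sq_abs (v ω), abs_nonneg (u ω),
    abs_nonneg (v ω)]

/-- At the optimal tuning parameter λ*, the minimized asymptotic variance
satisfies tr(Σ_{λ*}) ≤ tr(Σ_0) = tr(H⁻¹Var(∇ℓ)H⁻¹): optimally tuned (C)PPI never has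
larger asymptotic variance than ERM. Here `G = ∇ℓ` and `Gf = ∇ℓ^f̄`. -/
theorem tuned_cppi_no_worse_than_erm
    {Ω : Type*} [MeasurableSpace Ω] (μ : Measure Ω) [IsProbabilityMeasure μ]
    (d : ℕ) (G Gf : Ω → Fin d → ℝ)
    (hG : ∀ i, MemLp (fun ω => G ω i) 2 μ) (hGf : ∀ i, MemLp (fun ω => Gf ω i) 2 μ)
    (H : Matrix (Fin d) (Fin d) ℝ) (hHsym : H.IsSymm) (hHinv : IsUnit H.det)
    (r : ℝ) (hr : 0 < r)
    (Cov : (Ω → Fin d → ℝ) → (Ω → Fin d → ℝ) → Matrix (Fin d) (Fin d) ℝ)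
    (hCov : ∀ U V, Cov U V = Matrix.of fun i j =>
      ∫ ω, (U ω i - ∫ ω', U ω' i ∂μ) * (V ω j - ∫ ω', V ω' j ∂μ) ∂μ)
    (T : ℝ → ℝ)
    (hT : ∀ lam, T lam = Matrix.trace (H⁻¹
      * (r • (lam ^ 2 • Cov Gf Gf)
        + Cov (fun ω i => G ω i - lam * Gf ω i) (fun ω i => G ω i - lam * Gf ω i))
      * H⁻¹))
    (A : ℝ) (hA : A = Matrix.trace (H⁻¹ * Cov Gf Gf * H⁻¹)) (hApos : 0 < A)
    (lamStar : ℝ)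
    (hls : lamStar = Matrix.trace (H⁻¹ * (Cov G Gf + Cov Gf G) * H⁻¹)
      / (2 * (1 + r) * A)) :
    T lamStar ≤ T 0 ∧ T 0 = Matrix.trace (H⁻¹ * Cov G G * H⁻¹) := by
  have hGint : ∀ i, Integrable (fun ω => G ω i) μ := fun i => (hG i).integrable one_le_two
  have hGfint : ∀ i, Integrable (fun ω => Gf ω i) μ := fun i => (hGf i).integrable one_le_two
  set m : Fin d → ℝ := fun i => ∫ ω, G ω i ∂μ with hm
  set n : Fin d → ℝ := fun i => ∫ ω, Gf ω i ∂μ with hn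
  have hg2 : ∀ i, MemLp (fun ω => G ω i - m i) 2 μ := fun i => (hG i).sub (memLp_const _)
  have hf2 : ∀ i, MemLp (fun ω => Gf ω i - n i) 2 μ := fun i => (hGf i).sub (memLp_const _)
  -- key matrix identity
  have key : ∀ lam : ℝ,
      Cov (fun ω i => G ω i - lam * Gf ω i) (fun ω i => G ω i - lam * Gf ω i)
        = Cov G G + lam ^ 2 • Cov Gf Gf - lam • (Cov G Gf + Cov Gf G) := by
    intro lam
    have hmean : ∀ k, (∫ ω, (G ω k - lam * Gf ω k) ∂μ) = m k - lam * n k := by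
      intro k
      rw [integral_sub (hGint k) ((hGfint k).const_mul lam), integral_const_mul]
    have hmG : ∀ k, (∫ ω', G ω' k ∂μ) = m k := fun k => rfl
    have hmGf : ∀ k, (∫ ω', Gf ω' k ∂μ) = n k := fun k => rfl
    ext i j
    simp only [hCov, Matrix.add_apply, Matrix.sub_apply, Matrix.smul_apply, Matrix.of_apply,
      smul_eq_mul, hmean, hmG, hmGf]
    have hI1 := l2_mul_integrable (hg2 i) (hg2 j)
    have hI2 := l2_mul_integrable (hf2 i) (hf2 j)
    have hI3 := l2_mul_integrable (hg2 i) (hf2 j)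
    have hI4 := l2_mul_integrable (hf2 i) (hg2 j)
    have hcongr : (∫ ω, (G ω i - lam * Gf ω i - (m i - lam * n i))
        * (G ω j - lam * Gf ω j - (m j - lam * n j)) ∂μ)
        = ∫ ω, ((G ω i - m i) * (G ω j - m j)
            + lam ^ 2 * ((Gf ω i - n i) * (Gf ω j - n j))
            - lam * ((G ω i - m i) * (Gf ω j - n j) + (Gf ω i - n i) * (G ω j - m j))) ∂μ := by
      refine integral_congr_ae (Filter.Eventually.of_forall fun ω => ?_)
      ring
    have hS1 : Integrable (fun ω => (G ω i - m i) * (G ω j - m j)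
        + lam ^ 2 * ((Gf ω i - n i) * (Gf ω j - n j))) μ := hI1.add (hI2.const_mul _)
    have hS2 : Integrable (fun ω => lam * ((G ω i - m i) * (Gf ω j - n j)
        + (Gf ω i - n i) * (G ω j - m j))) μ := (hI3.add hI4).const_mul _
    rw [hcongr, integral_sub hS1 hS2, integral_add hI1 (hI2.const_mul _),
      integral_const_mul, integral_const_mul, integral_add hI3 hI4]
  -- scalar form of T
  set B : ℝ := Matrix.trace (H⁻¹ * (Cov G Gf + Cov Gf G) * H⁻¹) with hB
  set C : ℝ := Matrix.trace (H⁻¹ * Cov G G * H⁻¹) with hC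
  have hTform : ∀ lam, T lam = (1 + r) * A * lam ^ 2 - B * lam + C := by
    intro lam
    rw [hT, key, hA, hB, hC]
    simp only [Matrix.mul_add, Matrix.add_mul, Matrix.mul_sub, Matrix.sub_mul,
      Matrix.mul_smul, Matrix.smul_mul, Matrix.trace_add, Matrix.trace_sub,
      Matrix.trace_smul, smul_eq_mul]
    ring
  have hT0 : T 0 = C := by rw [hTform]; ring
  refine ⟨?_, hT0⟩
  rw [hT0, hTform lamStar, hls]
  have h1r : (0:ℝ) < 1 + r := by linarith
  have heq : (1 + r) * A * (B / (2 * (1 + r) * A)) ^ 2 - B * (B / (2 * (1 + r) * A))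
      = -(B ^ 2 / (4 * ((1 + r) * A))) := by
    field_simp
    ring
  have hpos : 0 ≤ B ^ 2 / (4 * ((1 + r) * A)) := by positivity
  linarith
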